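/- Let K = ⋃_n A_n be a Fraïssé structure with an exhaustion by finite substructures, where each A_n has finite big Ramsey degree R_n. Assume that for every r < ω there exist colorings γ^r_0, …, γ^r_{r-1} such that each γ^r_n is an unavoidable R_n-coloring of Emb(A_n,K) and γ^r_m ≪ γ^r_n for all m ≤ n < r. Then there exists a family of maps D(m,n) : Fin R_n × Emb(A_m,A_n) → Fin R_m (for m ≤ n < ω) such that: (a) for each m ≤ n and each f ∈ Emb(A_m,A_n), the map D(m,n)(·,f) is surjective; (b) for all m ≤ n ≤ N, f ∈ Emb(A_m,A_n), s ∈ Emb(A_n,A_N), and j ∈ Fin R_N, D(m,N)(j, s∘f) = D(m,n)(D(n,N)(j,s), f); (c) for every r < ω there are bijections σ_n : Fin R_n → image(γ^r_n) (n < r) such that for all m ≤ n < r, f ∈ Emb(A_m,A_n), j ∈ Fin R_n, and every s ∈ Emb(A_n,K) with γ^r_n(s) = σ_n(j), one has γ^r_m(s∘f) = σ_m(D(m,n)(j,f)). Moreover, any two families satisfying (a)–(c) are isomorphic: if D' is another such family, there are bijections τ_n : Fin R_n → Fin R_n (n < ω) with τ_m(D(m,n)(j,f)) = D'(m,n)(τ_n(j),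 f) for all m ≤ n < ω, j ∈ Fin R_n, and f ∈ Emb(A_m,A_n). -/

import Mathlib

open FirstOrder Language Set Function

/-- A subset `S ⊆ Emb(A,K)` is *large* if `η⁻¹(S) = Emb(A,K)` for some self-embedding `η` of `K`. -/
def EmbLarge {L : Language} {K : Type*} {A : Type*} [L.Structure K] [L.Structure A]
    (S : Set (A ↪[L] K)) : Prop :=
  ∃ η : K ↪[L] K, ∀ f : A ↪[L] K, η.comp f ∈ S

/-- A subset `S ⊆ Emb(A,K)` is *unavoidable* if `η⁻¹(S) ≠ ∅` for every self-embedding `η` of `K`. -/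
def EmbUnavoidable {L : Language} {K : Type*} {A : Type*} [L.Structure K] [L.Structure A]
    (S : Set (A ↪[L] K)) : Prop :=
  ∀ η : K ↪[L] K, ∃ f : A ↪[L] K, η.comp f ∈ S

/-- A subset `S ⊆ Emb(A,K)` is *somewhere unavoidable* if `η⁻¹(S)` is unavoidable for some
self-embedding `η` of `K`. -/
def EmbSomewhereUnavoidable {L : Language} {K : Type*} {A : Type*} [L.Structure K]
    [L.Structure A] (S : Set (A ↪[L] K)) : Prop :=
  ∃ η : K ↪[L] K, EmbUnavoidable {f : A ↪[L] K | η.comp f ∈ S}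

/-- A subset `S ⊆ Emb(A,K)` is *scattered* if it is not somewhere unavoidable. -/
def EmbScattered {L : Language} {K : Type*} {A : Type*} [L.Structure K] [L.Structure A]
    (S : Set (A ↪[L] K)) : Prop :=
  ¬ EmbSomewhereUnavoidable S

/-- A coloring of `Emb(A,K)` is *unavoidable* if each of its fibers is empty or unavoidable. -/
def UnavoidableColoring {L : Language} {K : Type*} {A : Type*} [L.Structure K]
    [L.Structure A] {C : Type*} (γ : (A ↪[L] K) → C) : Prop :=
  ∀ c : C, γ ⁻¹' {c} = ∅ ∨ EmbUnavoidable (γ ⁻¹' {c})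

/-- `A` has big Ramsey degree `ℓ` (in `K`) if `ℓ` is least such that for every `r` and every
coloring `γ : Emb(A,K) → Fin r` there is a self-embedding `η` of `K` with
`|{γ(η∘f) : f ∈ Emb(A,K)}| ≤ ℓ`. -/
def HasBigRamseyDegree {L : Language} (A : Type*) [L.Structure A] (K : Type*)
    [L.Structure K] (ℓ : ℕ) : Prop :=
  IsLeast {l : ℕ | ∀ (r : ℕ) (γ : (A ↪[L] K) → Fin r),
    ∃ η : K ↪[L] K, (Set.range fun f : A ↪[L] K => γ (η.comp f)).ncard ≤ l} ℓ

/-- `D` is an ω-diagram (based on the `Fin (R n)`) compatible with the given systems of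
colorings `γ r ·` (one system for each `r`): (a) each `D m n (·,f)` is surjective; (b) the
cocycle condition holds; (c) for each `r`, `D` restricted below `r` is isomorphic to the
diagram of the colorings `γ r 0 ≪ ⋯ ≪ γ r (r-1)`. -/
def DiagramConds {L : Language} {K : Type*} [L.Structure K]
    (A : ℕ → L.Substructure K) (R : ℕ → ℕ) {C : ℕ → ℕ → Type*}
    (γ : ∀ r n, (↥(A n) ↪[L] K) → C r n)
    (D : ∀ m n : ℕ, Fin (R n) → (↥(A m) ↪[L] ↥(A n)) → Fin (R m)) : Prop :=
  (∀ m n, m ≤ n → ∀ f : ↥(A m) ↪[L] ↥(A n),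
    Function.Surjective fun j : Fin (R n) => D m n j f) ∧
  (∀ m n N, m ≤ n → n ≤ N →
    ∀ (f : ↥(A m) ↪[L] ↥(A n)) (s : ↥(A n) ↪[L] ↥(A N)) (j : Fin (R N)),
      D m N j (s.comp f) = D m n (D n N j s) f) ∧
  (∀ r : ℕ, ∃ σ : ∀ n, Fin (R n) → C r n,
      (∀ n, n < r → Function.Injective (σ n) ∧ Set.range (σ n) = Set.range (γ r n)) ∧
      (∀ m n, m ≤ n → n < r →
        ∀ (f : ↥(A m) ↪[L] ↥(A n)) (j : Fin (R n)) (s : ↥(A n) ↪[L] K),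
          γ r n s = σ n j → γ r m (s.comp f) = σ m (D m n j f)))

section AuxBRD

variable {L : Language} {K : Type*} [L.Structure K] {A : Type*} [L.Structure A]

lemma brd_exists_of_mem_range {C : Type*} {γ : (A ↪[L] K) → C}
    (h : UnavoidableColoring γ) {c : C} (hc : c ∈ Set.range γ) (η : K ↪[L] K) :
    ∃ f, γ (η.comp f) = c := by
  rcases h c with h' | h'
  · obtain ⟨f, rfl⟩ := hc
    exact absurd (Set.eq_empty_iff_forall_notMem.mp h' f) (by simp)
  · obtain ⟨f, hf⟩ := h' η
    exact ⟨f, hf⟩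

lemma brd_restrict {C : Type*} {γ : (A ↪[L] K) → C}
    (hγ : UnavoidableColoring γ) (η : K ↪[L] K) :
    UnavoidableColoring (fun f => γ (η.comp f)) ∧
      Set.range (fun f => γ (η.comp f)) = Set.range γ := by
  constructor
  · intro c
    rcases hγ c with h | h
    · left
      ext f
      simp only [Set.mem_preimage, Set.mem_singleton_iff, Set.mem_empty_iff_false, iff_false]
      intro hf
      have : η.comp f ∈ γ ⁻¹' {c} := hf
      rw [h] at this
      exact this
    · right
      intro η'
      obtain ⟨f, hf⟩ := h (η.comp η')
      rw [Embedding.comp_assoc] at hf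
      exact ⟨f, hf⟩
  · apply subset_antisymm
    · rintro _ ⟨f, rfl⟩
      exact ⟨η.comp f, rfl⟩
    · rintro _ ⟨f, rfl⟩
      obtain ⟨g, hg⟩ := brd_exists_of_mem_range hγ (Set.mem_range_self f) η
      exact ⟨g, hg⟩

lemma brd_one_le [Nonempty (A ↪[L] K)] {ℓ : ℕ} (h : HasBigRamseyDegree (L := L) A K ℓ) :
    1 ≤ ℓ := by
  obtain ⟨η, hη⟩ := h.1 1 (fun _ => (0 : Fin 1))
  have : (Set.range fun _ : A ↪[L] K => (0 : Fin 1)) = {0} := Set.range_const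
  rw [this, Set.ncard_singleton] at hη
  exact hη

end AuxBRD

section Pairing

variable {L : Language} {K : Type*} [L.Structure K] {A : Type*} [L.Structure A]

lemma brd_pairing [Nonempty (A ↪[L] K)] {R : ℕ}
    (hbrd : HasBigRamseyDegree (L := L) A K R)
    {C₁ C₂ : Type*} (γ₁ : (A ↪[L] K) → C₁) (γ₂ : (A ↪[L] K) → C₂)
    (h₁ : UnavoidableColoring γ₁) (e₁ : (Set.range γ₁).ncard = R)
    (h₂ : UnavoidableColoring γ₂) (e₂ : (Set.range γ₂).ncard = R) :
    ∃ (η : K ↪[L] K) (b : C₁ → C₂), Set.InjOn b (Set.range γ₁) ∧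
      b '' Set.range γ₁ = Set.range γ₂ ∧
      ∀ f, γ₂ (η.comp f) = b (γ₁ (η.comp f)) := by
  classical
  have hRpos : 1 ≤ R := brd_one_le hbrd
  have hfin₁ : (Set.range γ₁).Finite := by
    by_contra h
    rw [Set.Infinite.ncard (fun h' => h h')] at e₁
    omega
  have hfin₂ : (Set.range γ₂).Finite := by
    by_contra h
    rw [Set.Infinite.ncard (fun h' => h h')] at e₂
    omega
  haveI := hfin₁.to_subtype
  haveI := hfin₂.to_subtype
  let eq₁ : (Set.range γ₁) ≃ Fin R :=
    Finite.equivFinOfCardEq (by rw [Nat.card_coe_set_eq, e₁])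
  let eq₂ : (Set.range γ₂) ≃ Fin R :=
    Finite.equivFinOfCardEq (by rw [Nat.card_coe_set_eq, e₂])
  set δ : (A ↪[L] K) → Fin (R * R) := fun f =>
    finProdFinEquiv (eq₁ ⟨γ₁ f, Set.mem_range_self f⟩, eq₂ ⟨γ₂ f, Set.mem_range_self f⟩) with hδ
  obtain ⟨η, hη⟩ := hbrd.1 (R * R) δ
  set P : Set (C₁ × C₂) := Set.range (fun f => (γ₁ (η.comp f), γ₂ (η.comp f))) with hP
  set g : Fin (R * R) → C₁ × C₂ := fun x =>
    ((eq₁.symm (finProdFinEquiv.symm x).1 : C₁), (eq₂.symm (finProdFinEquiv.symm x).2 : C₂))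
    with hg
  have hgδ : ∀ f, g (δ f) = (γ₁ f, γ₂ f) := by
    intro f
    have h := Equiv.symm_apply_apply finProdFinEquiv
      (eq₁ ⟨γ₁ f, Set.mem_range_self f⟩, eq₂ ⟨γ₂ f, Set.mem_range_self f⟩)
    simp only [hg, hδ, h, Equiv.symm_apply_apply]
  have hPg : P = g '' Set.range (fun f => δ (η.comp f)) := by
    rw [← Set.range_comp]
    ext p
    constructor
    · rintro ⟨f, rfl⟩
      exact ⟨f, (hgδ (η.comp f))⟩
    · rintro ⟨f, rfl⟩
      exact ⟨f, (hgδ (η.comp f)).symm⟩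
  have hPfin : P.Finite := by
    rw [hPg]
    exact (Set.toFinite _).image g
  have hPcard_le : P.ncard ≤ R := by
    rw [hPg]
    exact le_trans (Set.ncard_image_le (Set.toFinite _)) hη
  have hP1 : Prod.fst '' P = Set.range γ₁ := by
    apply subset_antisymm
    · rintro _ ⟨_, ⟨f, rfl⟩, rfl⟩
      exact ⟨η.comp f, rfl⟩
    · rintro c ⟨f, rfl⟩
      obtain ⟨f', hf'⟩ := brd_exists_of_mem_range h₁ (Set.mem_range_self f) η
      exact ⟨(γ₁ (η.comp f'), γ₂ (η.comp f')), ⟨f', rfl⟩, hf'⟩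
  have hP2 : Prod.snd '' P = Set.range γ₂ := by
    apply subset_antisymm
    · rintro _ ⟨_, ⟨f, rfl⟩, rfl⟩
      exact ⟨η.comp f, rfl⟩
    · rintro c ⟨f, rfl⟩
      obtain ⟨f', hf'⟩ := brd_exists_of_mem_range h₂ (Set.mem_range_self f) η
      exact ⟨(γ₁ (η.comp f'), γ₂ (η.comp f')), ⟨f', rfl⟩, hf'⟩
  have hPcard : P.ncard = R := by
    have h1 : R ≤ P.ncard := by
      calc R = (Prod.fst '' P).ncard := by rw [hP1, e₁]
      _ ≤ P.ncard := Set.ncard_image_le hPfin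
    omega
  have hinj1 : Set.InjOn Prod.fst P :=
    Set.injOn_of_ncard_image_eq (by rw [hP1, e₁, hPcard]) hPfin
  have hinj2 : Set.InjOn Prod.snd P :=
    Set.injOn_of_ncard_image_eq (by rw [hP2, e₂, hPcard]) hPfin
  have hmemP : ∀ f, (γ₁ (η.comp f), γ₂ (η.comp f)) ∈ P := fun f => ⟨f, rfl⟩
  set b : C₁ → C₂ := fun c =>
    if h : ∃ f, γ₁ (η.comp f) = c then γ₂ (η.comp h.choose)
    else γ₂ (η.comp (Classical.arbitrary _)) with hb
  have key : ∀ f, γ₂ (η.comp f) = b (γ₁ (η.comp f)) := by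
    intro f
    have hex : ∃ f', γ₁ (η.comp f') = γ₁ (η.comp f) := ⟨f, rfl⟩
    rw [hb]
    simp only [dif_pos hex]
    have hspec := hex.choose_spec
    have : (γ₁ (η.comp hex.choose), γ₂ (η.comp hex.choose))
        = (γ₁ (η.comp f), γ₂ (η.comp f)) :=
      hinj1 (hmemP hex.choose) (hmemP f) hspec
    exact (congrArg Prod.snd this).symm
  have hbval : ∀ c ∈ Set.range γ₁, ∃ f, γ₁ (η.comp f) = c ∧ b c = γ₂ (η.comp f) := by
    intro c hc
    obtain ⟨f, hf⟩ := brd_exists_of_mem_range h₁ hc η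
    exact ⟨f, hf, by rw [← hf, ← key f]⟩
  refine ⟨η, b, ?_, ?_, key⟩
  · intro c₁ hc₁ c₂ hc₂ hbc
    obtain ⟨f₁, hf₁, hb₁⟩ := hbval c₁ hc₁
    obtain ⟨f₂, hf₂, hb₂⟩ := hbval c₂ hc₂
    have : γ₂ (η.comp f₁) = γ₂ (η.comp f₂) := by rw [← hb₁, ← hb₂, hbc]
    have := hinj2 (hmemP f₁) (hmemP f₂) this
    rw [← hf₁, ← hf₂]
    exact congrArg Prod.fst this
  · apply subset_antisymm
    · rintro _ ⟨c, hc, rfl⟩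
      obtain ⟨f, hf, hbv⟩ := hbval c hc
      rw [hbv]
      exact ⟨η.comp f, rfl⟩
    · rintro c ⟨f, rfl⟩
      obtain ⟨f', hf'⟩ := brd_exists_of_mem_range h₂ (Set.mem_range_self f) η
      exact ⟨γ₁ (η.comp f'), ⟨η.comp f', rfl⟩, by rw [← key f', hf']⟩

end Pairing

section Compare

variable {L : Language} {K : Type*} [L.Structure K]

lemma brd_compare (A : ℕ → L.Substructure K) (R : ℕ → ℕ)
    (hNE : ∀ n, Nonempty (↥(A n) ↪[L] K))
    (hR : ∀ n, HasBigRamseyDegree (L := L) ↥(A n) K (R n))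
    {C₁ C₂ : ℕ → Type*} (γ₁ : ∀ n, (↥(A n) ↪[L] K) → C₁ n)
    (γ₂ : ∀ n, (↥(A n) ↪[L] K) → C₂ n) (r : ℕ)
    (h₁ : ∀ n, n < r → UnavoidableColoring (γ₁ n) ∧ (Set.range (γ₁ n)).ncard = R n)
    (h₂ : ∀ n, n < r → UnavoidableColoring (γ₂ n) ∧ (Set.range (γ₂ n)).ncard = R n) :
    ∃ (η : K ↪[L] K) (b : ∀ n, C₁ n → C₂ n),
      ∀ n, n < r → Set.InjOn (b n) (Set.range (γ₁ n)) ∧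
        (b n) '' (Set.range (γ₁ n)) = Set.range (γ₂ n) ∧
        ∀ f, γ₂ n (η.comp f) = b n (γ₁ n (η.comp f)) := by
  classical
  induction r with
  | zero =>
    exact ⟨Embedding.refl L K, fun n _ => γ₂ n ((hNE n).some), fun n hn => absurd hn (by omega)⟩
  | succ r ih =>
    obtain ⟨η, b, hb⟩ := ih (fun n hn => h₁ n (by omega)) (fun n hn => h₂ n (by omega))
    haveI := hNE r
    have hres₁ := brd_restrict (h₁ r (by omega)).1 η
    have hres₂ := brd_restrict (h₂ r (by omega)).1 η
    obtain ⟨η', br, hinj, him, hkey⟩ := brd_pairing (hR r)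
      (fun f => γ₁ r (η.comp f)) (fun f => γ₂ r (η.comp f))
      hres₁.1 (by rw [hres₁.2]; exact (h₁ r (by omega)).2)
      hres₂.1 (by rw [hres₂.2]; exact (h₂ r (by omega)).2)
    refine ⟨η.comp η', Function.update b r br, fun n hn => ?_⟩
    rcases Nat.lt_succ_iff_lt_or_eq.mp hn with hn' | rfl
    · rw [Function.update_of_ne (Nat.ne_of_lt hn')]
      obtain ⟨hbi, hbr, hbk⟩ := hb n hn'
      refine ⟨hbi, hbr, fun f => ?_⟩
      rw [Embedding.comp_assoc]
      exact hbk (η'.comp f)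
    · rw [Function.update_self]
      refine ⟨by rw [← hres₁.2]; exact hinj, by rw [← hres₁.2, ← hres₂.2]; exact him,
        fun f => ?_⟩
      rw [Embedding.comp_assoc]
      exact hkey f

end Compare

open CategoryTheory in
lemma konig_nat {X : ℕ → Type*} (hXf : ∀ r, Finite (X r)) (hXn : ∀ r, Nonempty (X r))
    (res : ∀ r r', r ≤ r' → X r' → X r)
    (hid : ∀ r x, res r r le_rfl x = x)
    (htrans : ∀ r r' r'' (h : r ≤ r') (h' : r' ≤ r'') x,
      res r r' h (res r' r'' h' x) = res r r'' (h.trans h') x) :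
    ∃ u : ∀ r, X r, ∀ r r' (h : r ≤ r'), res r r' h (u r') = u r := by
  let F : ℕᵒᵖ ⥤ Type _ :=
    { obj := fun r => X r.unop
      map := fun {a b} f => TypeCat.ofHom (res b.unop a.unop (leOfHom f.unop))
      map_id := fun a => by ext x; exact hid a.unop x
      map_comp := fun {a b c} f g => by
        ext x; exact (htrans c.unop b.unop a.unop (leOfHom g.unop) (leOfHom f.unop) x).symm }
  haveI : ∀ j : ℕᵒᵖ, Finite (F.obj j) := fun j => hXf j.unop
  haveI : ∀ j : ℕᵒᵖ, Nonempty (F.obj j) := fun j => hXn j.unop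
  obtain ⟨u, hu⟩ := nonempty_sections_of_finite_inverse_system F
  refine ⟨fun r => u (Opposite.op r), fun r r' h => ?_⟩
  exact hu (Quiver.Hom.op (homOfLE h) : Opposite.op r' ⟶ Opposite.op r)
theorem exists_unique_bigRamsey_diagram {L : Language} {K : Type*} [L.Structure K]
    [Countable K] [L.IsRelational] [Countable L.Symbols]
    (hK : L.IsUltrahomogeneous K)
    (A : ℕ → L.Substructure K) (hmono : Monotone A)
    (hfin : ∀ n, ((A n : Set K)).Finite) (hcover : ∀ x : K, ∃ n, x ∈ A n)
    (R : ℕ → ℕ) (hR : ∀ n, HasBigRamseyDegree (L := L) ↥(A n) K (R n))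
    {C : ℕ → ℕ → Type*} (γ : ∀ r n, (↥(A n) ↪[L] K) → C r n)
    (hu : ∀ r n, n < r → UnavoidableColoring (γ r n) ∧ (Set.range (γ r n)).ncard = R n)
    (href : ∀ r m n, m ≤ n → n < r →
      ∀ (f : ↥(A m) ↪[L] ↥(A n)) (s₀ s₁ : ↥(A n) ↪[L] K),
        γ r n s₀ = γ r n s₁ → γ r m (s₀.comp f) = γ r m (s₁.comp f)) :
    ∃ D : ∀ m n : ℕ, Fin (R n) → (↥(A m) ↪[L] ↥(A n)) → Fin (R m),
      DiagramConds A R γ D ∧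
      ∀ D' : ∀ m n : ℕ, Fin (R n) → (↥(A m) ↪[L] ↥(A n)) → Fin (R m),
        DiagramConds A R γ D' →
        ∃ τ : ∀ n, Fin (R n) → Fin (R n),
          (∀ n, Function.Bijective (τ n)) ∧
          ∀ m n, m ≤ n → ∀ (j : Fin (R n)) (f : ↥(A m) ↪[L] ↥(A n)),
            τ m (D m n j f) = D' m n (τ n j) f := by
  classical
  have hNE : ∀ n, Nonempty (↥(A n) ↪[L] K) := fun n => ⟨(A n).subtype⟩
  have hFinA : ∀ n, Finite ↥(A n) := fun n => (hfin n).to_subtype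
  haveI hFinEmb : ∀ m n : ℕ, Finite (↥(A m) ↪[L] ↥(A n)) := fun m n =>
    haveI := hFinA m
    haveI := hFinA n
    Finite.of_injective (fun f => (f : ↥(A m) → ↥(A n))) DFunLike.coe_injective
  have hRpos : ∀ n, 1 ≤ R n := fun n => haveI := hNE n; brd_one_le (hR n)
  -- Step 1 : relabeled systems `Γ r` with index maps `σsys r`
  have hΓex : ∀ r, ∃ (Γ : ∀ n, (↥(A n) ↪[L] K) → Fin (R n))
      (σ : ∀ n, Fin (R n) → C r n),
      (∀ n, n < r → UnavoidableColoring (Γ n) ∧ Function.Surjective (Γ n) ∧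
        (Set.range (Γ n)).ncard = R n ∧
        ∀ m, m ≤ n → ∀ (f : ↥(A m) ↪[L] ↥(A n)) (s₀ s₁ : ↥(A n) ↪[L] K),
          Γ n s₀ = Γ n s₁ → Γ m (s₀.comp f) = Γ m (s₁.comp f)) ∧
      (∀ n, n < r → Function.Injective (σ n) ∧ Set.range (σ n) = Set.range (γ r n) ∧
        ∀ (s : ↥(A n) ↪[L] K) (j : Fin (R n)), (Γ n s = j ↔ γ r n s = σ n j)) := by
    intro r
    have hEq : ∀ n, n < r → Nonempty ((Set.range (γ r n)) ≃ Fin (R n)) := by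
      intro n hn
      have hfinr : (Set.range (γ r n)).Finite := by
        by_contra h
        have h0 := Set.Infinite.ncard (s := Set.range (γ r n)) (fun h' => h h')
        have h1 := (hu r n hn).2
        have h2 := hRpos n
        omega
      haveI := hfinr.to_subtype
      exact ⟨Finite.equivFinOfCardEq (by rw [Nat.card_coe_set_eq, (hu r n hn).2])⟩
    let E : ∀ n, n < r → ((Set.range (γ r n)) ≃ Fin (R n)) := fun n hn => (hEq n hn).some
    have hiff : ∀ n (hn : n < r) (s : ↥(A n) ↪[L] K) (j : Fin (R n)),
        (E n hn ⟨γ r n s, Set.mem_range_self s⟩ = j ↔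
          γ r n s = ((E n hn).symm j : C r n)) := by
      intro n hn s j
      rw [Equiv.apply_eq_iff_eq_symm_apply]
      exact Subtype.ext_iff
    refine ⟨fun n => if hn : n < r
        then (fun s => E n hn ⟨γ r n s, Set.mem_range_self s⟩)
        else fun _ => ⟨0, hRpos n⟩,
      fun n => if hn : n < r then (fun j => ((E n hn).symm j : C r n))
        else fun _ => γ r n ((hNE n).some), ?_, ?_⟩
    · intro n hn
      simp only [dif_pos hn]
      have hsurj : Function.Surjective
          (fun s : ↥(A n) ↪[L] K => E n hn ⟨γ r n s, Set.mem_range_self s⟩) := by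
        intro j
        obtain ⟨s, hs⟩ := ((E n hn).symm j).2
        exact ⟨s, (hiff n hn s j).mpr hs⟩
      refine ⟨?_, hsurj, ?_, ?_⟩
      · intro j
        right
        intro η
        obtain ⟨f, hf⟩ := brd_exists_of_mem_range (hu r n hn).1 ((E n hn).symm j).2 η
        exact ⟨f, (hiff n hn _ j).mpr hf⟩
      · rw [Set.range_eq_univ.mpr hsurj, Set.ncard_univ, Nat.card_eq_fintype_card,
          Fintype.card_fin]
      · intro m hm f s₀ s₁ h01
        have hmr : m < r := lt_of_le_of_lt hm hn
        simp only [dif_pos hmr]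
        have h01' : γ r n s₀ = γ r n s₁ := Subtype.ext_iff.mp ((E n hn).injective h01)
        exact congrArg _ (Subtype.ext (href r m n hm hn f s₀ s₁ h01'))
    · intro n hn
      simp only [dif_pos hn]
      refine ⟨?_, ?_, fun s j => hiff n hn s j⟩
      · intro j₁ j₂ h
        exact (E n hn).symm.injective (Subtype.coe_injective h)
      · have h1 : Set.range (fun j => (((E n hn).symm j : Set.range (γ r n)) : C r n))
            = Set.range (Subtype.val : (Set.range (γ r n)) → C r n) :=
          Function.Surjective.range_comp (E n hn).symm.surjective _
        rw [h1, Subtype.range_coe]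
  choose Γ σsys hΓ using hΓex
  -- Step 2 : the canonical diagrams `dd r` from the systems `Γ r`
  have hddex : ∀ r, ∃ dd : ∀ m n : ℕ, Fin (R n) → (↥(A m) ↪[L] ↥(A n)) → Fin (R m),
      ∀ m n, m ≤ n → n < r → ∀ (j : Fin (R n)) (f : ↥(A m) ↪[L] ↥(A n))
        (s : ↥(A n) ↪[L] K), Γ r n s = j → dd m n j f = Γ r m (s.comp f) := by
    intro r
    refine ⟨fun m n j f => if h : ∃ s : ↥(A n) ↪[L] K, Γ r n s = j
        then Γ r m (h.choose.comp f) else ⟨0, hRpos m⟩, ?_⟩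
    intro m n hmn hnr j f s hs
    have hex : ∃ s' : ↥(A n) ↪[L] K, Γ r n s' = j := ⟨s, hs⟩
    simp only [dif_pos hex]
    exact ((hΓ r).1 n hnr).2.2.2 m hmn f _ s (hex.choose_spec.trans hs.symm)
  choose dd hdd using hddex
  -- surjectivity of dd
  have hddS : ∀ r m n, m ≤ n → n < r → ∀ f : ↥(A m) ↪[L] ↥(A n),
      Function.Surjective (fun j => dd r m n j f) := by
    intro r m n hmn hnr f i
    have hmr : m < r := lt_of_le_of_lt hmn hnr
    obtain ⟨g, hg⟩ := ((hΓ r).1 m hmr).2.1 i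
    haveI := hNE n
    have hFG : Structure.FG L ↥(A m) := Structure.fg_iff_finite.mpr (hFinA m)
    obtain ⟨s, hs⟩ := hK.extend_embedding hFG g f
    exact ⟨Γ r n s, by show dd r m n (Γ r n s) f = i; rw [hdd r m n hmn hnr (Γ r n s) f s rfl, ← hs, hg]⟩
  -- cocycle for dd
  have hddC : ∀ r m n N, m ≤ n → n ≤ N → N < r →
      ∀ (f : ↥(A m) ↪[L] ↥(A n)) (s : ↥(A n) ↪[L] ↥(A N)) (j : Fin (R N)),
        dd r m N j (s.comp f) = dd r m n (dd r n N j s) f := by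
    intro r m n N hmn hnN hNr f s j
    obtain ⟨t, ht⟩ := ((hΓ r).1 N hNr).2.1 j
    rw [hdd r m N (hmn.trans hnN) hNr j (s.comp f) t ht,
        hdd r n N hnN hNr j s t ht,
        hdd r m n hmn (lt_of_le_of_lt hnN hNr) _ f (t.comp s) rfl,
        Embedding.comp_assoc]
  -- compatibility of dd with the original colorings
  have hlink : ∀ r m n, m ≤ n → n < r →
      ∀ (f : ↥(A m) ↪[L] ↥(A n)) (j : Fin (R n)) (s : ↥(A n) ↪[L] K),
        γ r n s = σsys r n j → γ r m (s.comp f) = σsys r m (dd r m n j f) := by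
    intro r m n hmn hnr f j s hγs
    have hmr : m < r := lt_of_le_of_lt hmn hnr
    have hΓs : Γ r n s = j := (((hΓ r).2 n hnr).2.2 s j).mpr hγs
    rw [hdd r m n hmn hnr j f s hΓs]
    exact (((hΓ r).2 m hmr).2.2 (s.comp f) (Γ r m (s.comp f))).mp rfl
  -- comparison of the diagrams dd r, dd r'
  have hcmp : ∀ r r', r ≤ r' → ∃ τ : ∀ n, Fin (R n) → Fin (R n),
      (∀ n, Function.Bijective (τ n)) ∧
      ∀ m n, m ≤ n → n < r → ∀ (j : Fin (R n)) (f : ↥(A m) ↪[L] ↥(A n)),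
        τ m (dd r m n j f) = dd r' m n (τ n j) f := by
    intro r r' hrr'
    obtain ⟨η, b, hb⟩ := brd_compare A R hNE hR (Γ r) (Γ r') r
      (fun n hn => ⟨((hΓ r).1 n hn).1, ((hΓ r).1 n hn).2.2.1⟩)
      (fun n hn => ⟨((hΓ r').1 n (hn.trans_le hrr')).1,
        ((hΓ r').1 n (hn.trans_le hrr')).2.2.1⟩)
    refine ⟨fun n => if hn : n < r then b n else id, ?_, ?_⟩
    · intro n
      by_cases hn : n < r
      · simp only [dif_pos hn]
        have hinj : Function.Injective (b n) := by
          have h1 := (hb n hn).1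
          rw [Set.range_eq_univ.mpr ((hΓ r).1 n hn).2.1] at h1
          exact Set.injOn_univ.mp h1
        exact Finite.injective_iff_bijective.mp hinj
      · simp only [dif_neg hn]
        exact Function.bijective_id
    · intro m n hmn hnr j f
      have hmr : m < r := lt_of_le_of_lt hmn hnr
      simp only [dif_pos hnr, dif_pos hmr]
      obtain ⟨s₀, hs₀⟩ := ((hΓ r).1 n hnr).2.1 j
      have hne : s₀ ∈ Γ r n ⁻¹' {j} := hs₀
      rcases ((hΓ r).1 n hnr).1 j with hemp | hunav
      · rw [hemp] at hne
        exact absurd hne (Set.notMem_empty s₀)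
      obtain ⟨s, hs⟩ := hunav η
      have hs' : Γ r n (η.comp s) = j := hs
      have h1 : dd r m n j f = Γ r m ((η.comp s).comp f) := hdd r m n hmn hnr j f _ hs'
      have h2 : Γ r' n (η.comp s) = b n j := by rw [(hb n hnr).2.2 s, hs']
      have h3 : dd r' m n (b n j) f = Γ r' m ((η.comp s).comp f) :=
        hdd r' m n hmn (hnr.trans_le hrr') (b n j) f _ h2
      rw [h1, h3, Embedding.comp_assoc]
      exact ((hb m hmr).2.2 (s.comp f)).symm
  -- Step 3 : inverse limit of normalized diagrams
  let Bad : ∀ m, Fin (R m) := fun m => ⟨0, hRpos m⟩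
  let XD : ℕ → Type _ := fun r =>
    {D : ∀ m n : ℕ, Fin (R n) → (↥(A m) ↪[L] ↥(A n)) → Fin (R m) //
      (∀ m n, ¬(m ≤ n ∧ n < r) → ∀ j f, D m n j f = Bad m) ∧
      ∃ τ : ∀ n, Fin (R n) → Fin (R n), (∀ n, Function.Bijective (τ n)) ∧
        ∀ m n, m ≤ n → n < r → ∀ j f, τ m (dd r m n j f) = D m n (τ n j) f}
  have hXDfin : ∀ r, Finite (XD r) := by
    intro r
    apply Finite.of_injective (β := ∀ m n : Fin r,
      Fin (R (n : ℕ)) → (↥(A (m : ℕ)) ↪[L] ↥(A (n : ℕ))) → Fin (R (m : ℕ)))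
      (fun D => fun m n => D.1 m n)
    intro D₁ D₂ h
    apply Subtype.ext
    funext m n j f
    by_cases hc : m ≤ n ∧ n < r
    · have hm : m < r := lt_of_le_of_lt hc.1 hc.2
      exact congrFun (congrFun (congrFun (congrFun h ⟨m, hm⟩) ⟨n, hc.2⟩) j) f
    · rw [D₁.2.1 m n hc, D₂.2.1 m n hc]
  have hXDne : ∀ r, Nonempty (XD r) := by
    intro r
    refine ⟨⟨fun m n j f => if m ≤ n ∧ n < r then dd r m n j f else Bad m, ?_, ?_⟩⟩
    · intro m n hc j f
      exact if_neg hc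
    · refine ⟨fun n => id, fun n => Function.bijective_id, ?_⟩
      intro m n hmn hnr j f
      simp only [id_eq]
      rw [if_pos ⟨hmn, hnr⟩]
  have hresex : ∀ r r', r ≤ r' → ∀ D : XD r', ∃ E : XD r,
      ∀ m n j f, E.1 m n j f = if m ≤ n ∧ n < r then D.1 m n j f else Bad m := by
    intro r r' hrr' D
    refine ⟨⟨fun m n j f => if m ≤ n ∧ n < r then D.1 m n j f else Bad m, ?_, ?_⟩,
      fun m n j f => rfl⟩
    · intro m n hc j f
      exact if_neg hc
    · obtain ⟨τ', hτ'bij, hτ'⟩ := D.2.2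
      obtain ⟨ρ, hρbij, hρ⟩ := hcmp r r' hrr'
      refine ⟨fun n => τ' n ∘ ρ n, fun n => (hτ'bij n).comp (hρbij n), ?_⟩
      intro m n hmn hnr j f
      show τ' m (ρ m (dd r m n j f)) =
        if m ≤ n ∧ n < r then D.1 m n (τ' n (ρ n j)) f else Bad m
      rw [if_pos ⟨hmn, hnr⟩, hρ m n hmn hnr j f]
      exact hτ' m n hmn (hnr.trans_le hrr') (ρ n j) f
  choose resD hresD using hresex
  have hid' : ∀ r x, resD r r le_rfl x = x := by
    intro r x
    apply Subtype.ext
    funext m n j f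
    rw [hresD r r le_rfl x m n j f]
    by_cases hc : m ≤ n ∧ n < r
    · rw [if_pos hc]
    · rw [if_neg hc, x.2.1 m n hc]
  have htrans' : ∀ r r' r'' (h : r ≤ r') (h' : r' ≤ r'') x,
      resD r r' h (resD r' r'' h' x) = resD r r'' (h.trans h') x := by
    intro r r' r'' h h' x
    apply Subtype.ext
    funext m n j f
    rw [hresD, hresD, hresD]
    by_cases hc : m ≤ n ∧ n < r
    · rw [if_pos hc, if_pos hc, if_pos ⟨hc.1, lt_of_lt_of_le hc.2 h⟩]
    · rw [if_neg hc, if_neg hc]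
  obtain ⟨u, hu2⟩ := konig_nat hXDfin hXDne resD hid' htrans'
  set Dfun : ∀ m n : ℕ, Fin (R n) → (↥(A m) ↪[L] ↥(A n)) → Fin (R m) :=
    fun m n j f => if m ≤ n then (u (n+1)).1 m n j f else Bad m with hDfun
  have hDagree : ∀ r m n, m ≤ n → n < r → ∀ j f, Dfun m n j f = (u r).1 m n j f := by
    intro r m n hmn hnr j f
    simp only [hDfun]
    rw [if_pos hmn]
    have h2 := hresD (n+1) r hnr (u r) m n j f
    rw [hu2 (n+1) r hnr] at h2
    rw [h2, if_pos ⟨hmn, Nat.lt_succ_self n⟩]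
  have hDconds : DiagramConds A R γ Dfun := by
    refine ⟨?_, ?_, ?_⟩
    · -- (a) surjectivity
      intro m n hmn f i
      obtain ⟨τ, hτbij, hτ⟩ := (u (n+1)).2.2
      obtain ⟨i₀, hi₀⟩ := (hτbij m).2 i
      obtain ⟨j₀, hj₀⟩ := hddS (n+1) m n hmn (Nat.lt_succ_self n) f i₀
      have hj₀' : dd (n+1) m n j₀ f = i₀ := hj₀
      refine ⟨τ n j₀, ?_⟩
      show Dfun m n (τ n j₀) f = i
      rw [hDagree (n+1) m n hmn (Nat.lt_succ_self n) (τ n j₀) f,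
        ← hτ m n hmn (Nat.lt_succ_self n) j₀ f, hj₀', hi₀]
    · -- (b) cocycle
      intro m n N hmn hnN f s j
      obtain ⟨τ, hτbij, hτ⟩ := (u (N+1)).2.2
      obtain ⟨j₀, hj₀⟩ := (hτbij N).2 j
      rw [hDagree (N+1) m N (hmn.trans hnN) (Nat.lt_succ_self N) j (s.comp f),
        hDagree (N+1) n N hnN (Nat.lt_succ_self N) j s,
        hDagree (N+1) m n hmn (Nat.lt_succ_of_le hnN), ← hj₀,
        ← hτ m N (hmn.trans hnN) (Nat.lt_succ_self N) j₀ (s.comp f),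
        ← hτ n N hnN (Nat.lt_succ_self N) j₀ s,
        hddC (N+1) m n N hmn hnN (Nat.lt_succ_self N) f s j₀,
        hτ m n hmn (Nat.lt_succ_of_le hnN) (dd (N+1) n N j₀ s) f]
    · -- (c) compatibility with each system
      intro r
      obtain ⟨τ, hτbij, hτ⟩ := (u r).2.2
      let e : ∀ n, Fin (R n) ≃ Fin (R n) := fun n => Equiv.ofBijective (τ n) (hτbij n)
      refine ⟨fun n j => σsys r n ((e n).symm j), ?_, ?_⟩
      · intro n hn
        constructor
        · intro j₁ j₂ h
          exact (e n).symm.injective (((hΓ r).2 n hn).1 h)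
        · have h1 : Set.range (fun j => σsys r n ((e n).symm j))
              = Set.range (σsys r n) :=
            Function.Surjective.range_comp (e n).symm.surjective _
          rw [h1, ((hΓ r).2 n hn).2.1]
      · intro m n hmn hnr f j s hs
        have hl := hlink r m n hmn hnr f ((e n).symm j) s hs
        rw [hl]
        apply congrArg (σsys r m)
        rw [Equiv.eq_symm_apply]
        show τ m (dd r m n ((e n).symm j) f) = _
        rw [hτ m n hmn hnr ((e n).symm j) f,
          show τ n ((e n).symm j) = j from (e n).apply_symm_apply j]
        exact (hDagree r m n hmn hnr j f).symm
  refine ⟨Dfun, hDconds, ?_⟩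
  intro D' hD'
  have hbridge : ∀ r, ∃ ρ : ∀ n, Fin (R n) → Fin (R n), (∀ n, Function.Bijective (ρ n)) ∧
      ∀ m n, m ≤ n → n < r → ∀ j f, ρ m (Dfun m n j f) = D' m n (ρ n j) f := by
    intro r
    obtain ⟨σ₁, hσ₁, hc₁⟩ := hDconds.2.2 r
    obtain ⟨σ₂, hσ₂, hc₂⟩ := hD'.2.2 r
    have hexρ : ∀ n, n < r → ∀ j : Fin (R n), ∃ j', σ₂ n j' = σ₁ n j := by
      intro n hn j
      have h1 : σ₁ n j ∈ Set.range (σ₂ n) := by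
        rw [(hσ₂ n hn).2, ← (hσ₁ n hn).2]
        exact Set.mem_range_self j
      exact h1
    refine ⟨fun n => if hn : n < r then (fun j => (hexρ n hn j).choose) else id, ?_, ?_⟩
    · intro n
      by_cases hn : n < r
      · simp only [dif_pos hn]
        rw [← Finite.injective_iff_bijective]
        intro j₁ j₂ hj
        apply (hσ₁ n hn).1
        rw [← (hexρ n hn j₁).choose_spec, ← (hexρ n hn j₂).choose_spec]
        exact congrArg (σ₂ n) hj
      · simp only [dif_neg hn]
        exact Function.bijective_id
    · intro m n hmn hnr j f
      have hmr : m < r := lt_of_le_of_lt hmn hnr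
      simp only [dif_pos hnr, dif_pos hmr]
      obtain ⟨s, hs⟩ : σ₁ n j ∈ Set.range (γ r n) := by
        rw [← (hσ₁ n hnr).2]
        exact Set.mem_range_self j
      have k₁ := hc₁ m n hmn hnr f j s hs
      have hs₂ : γ r n s = σ₂ n ((hexρ n hnr j).choose) := by
        rw [hs, (hexρ n hnr j).choose_spec]
      have k₂ := hc₂ m n hmn hnr f _ s hs₂
      apply (hσ₂ m hmr).1
      rw [(hexρ m hmr (Dfun m n j f)).choose_spec, ← k₁, k₂]
  let XB : ℕ → Type _ := fun r =>
    {ρ : ∀ n, Fin (R n) → Fin (R n) //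
      (∀ n, ¬ n < r → ρ n = id) ∧ (∀ n, Function.Bijective (ρ n)) ∧
      ∀ m n, m ≤ n → n < r → ∀ j f, ρ m (Dfun m n j f) = D' m n (ρ n j) f}
  have hXBfin : ∀ r, Finite (XB r) := by
    intro r
    apply Finite.of_injective (β := ∀ n : Fin r, Fin (R (n : ℕ)) → Fin (R (n : ℕ)))
      (fun ρ => fun n => ρ.1 n)
    intro ρ₁ ρ₂ h
    apply Subtype.ext
    funext n
    by_cases hn : n < r
    · exact congrFun h ⟨n, hn⟩
    · rw [ρ₁.2.1 n hn, ρ₂.2.1 n hn]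
  have hXBne : ∀ r, Nonempty (XB r) := by
    intro r
    obtain ⟨ρ, hρbij, hρ⟩ := hbridge r
    refine ⟨⟨fun n => if hn : n < r then ρ n else id, ?_, ?_, ?_⟩⟩
    · intro n hn
      exact dif_neg hn
    · intro n
      by_cases hn : n < r
      · simpa only [dif_pos hn] using hρbij n
      · simp only [dif_neg hn]
        exact Function.bijective_id
    · intro m n hmn hnr j f
      have hmr : m < r := lt_of_le_of_lt hmn hnr
      simp only [dif_pos hnr, dif_pos hmr]
      exact hρ m n hmn hnr j f
  have hresBex : ∀ r r', r ≤ r' → ∀ ρ : XB r', ∃ ρ' : XB r,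
      ∀ n, ρ'.1 n = if n < r then ρ.1 n else id := by
    intro r r' hrr' ρ
    refine ⟨⟨fun n => if n < r then ρ.1 n else id, ?_, ?_, ?_⟩, fun n => rfl⟩
    · intro n hn
      exact if_neg hn
    · intro n
      by_cases hn : n < r
      · simpa only [if_pos hn] using ρ.2.2.1 n
      · simp only [if_neg hn]
        exact Function.bijective_id
    · intro m n hmn hnr j f
      have hmr : m < r := lt_of_le_of_lt hmn hnr
      show (if m < r then ρ.1 m else id) (Dfun m n j f)
        = D' m n ((if n < r then ρ.1 n else id) j) f
      rw [if_pos hmr, if_pos hnr]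
      exact ρ.2.2.2 m n hmn (hnr.trans_le hrr') j f
  choose resB hresB using hresBex
  have hidB : ∀ r x, resB r r le_rfl x = x := by
    intro r x
    apply Subtype.ext
    funext n
    rw [hresB r r le_rfl x n]
    by_cases hn : n < r
    · rw [if_pos hn]
    · rw [if_neg hn, x.2.1 n hn]
  have htransB : ∀ r r' r'' (h : r ≤ r') (h' : r' ≤ r'') x,
      resB r r' h (resB r' r'' h' x) = resB r r'' (h.trans h') x := by
    intro r r' r'' h h' x
    apply Subtype.ext
    funext n
    rw [hresB, hresB, hresB]
    by_cases hn : n < r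
    · rw [if_pos hn, if_pos hn, if_pos (lt_of_lt_of_le hn h)]
    · rw [if_neg hn, if_neg hn]
  obtain ⟨v, hv⟩ := konig_nat hXBfin hXBne resB hidB htransB
  refine ⟨fun n => (v (n+1)).1 n, ?_, ?_⟩
  · intro n
    exact (v (n+1)).2.2.1 n
  · intro m n hmn j f
    have hvm : (v (m+1)).1 m = (v (n+1)).1 m := by
      have h1 := hv (m+1) (n+1) (by omega)
      rw [← h1, hresB (m+1) (n+1) (by omega) (v (n+1)) m, if_pos (Nat.lt_succ_self m)]
    show (v (m+1)).1 m (Dfun m n j f) = D' m n ((v (n+1)).1 n j) f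
    rw [hvm]
    exact (v (n+1)).2.2.2 m n hmn (Nat.lt_succ_self n) j f
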